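/- Jacobi–Gegenbauer summation (odd case): for every natural number n ≥ 2, every N ∈ ℕ, every λ ∈ ℂ and every i with 0 ≤ i ≤ N, one has Σ_{j=0}^{N−i} (−1)^{N−j−i} · binom(N−j, i) · b_j^{(N)}(λ) = β_i^{(N)}(λ). -/

import Mathlib

set_option maxHeartbeats 1000000


open Finset Polynomial

noncomputable def aC (n N j : ℕ) (l : ℂ) : ℂ :=
  (-2 : ℂ) ^ (N - j) *
    ((N.factorial : ℂ) / ((j.factorial : ℂ) * ((2 * N - 2 * j).factorial : ℂ))) *
    ∏ k ∈ Finset.Ico j N, (2 * l - 4 * (N : ℂ) + 2 * (k : ℂ) + (n : ℂ) + 1)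

noncomputable def bC (n N j : ℕ) (l : ℂ) : ℂ :=
  (-2 : ℂ) ^ (N - j) *
    ((N.factorial : ℂ) / ((j.factorial : ℂ) * ((2 * N - 2 * j + 1).factorial : ℂ))) *
    ∏ k ∈ Finset.Ico j N, (2 * l - 4 * (N : ℂ) + 2 * (k : ℂ) + (n : ℂ) - 1)

noncomputable def bCZ (n M : ℕ) (j : ℤ) (l : ℂ) : ℂ :=
  if 0 ≤ j ∧ j ≤ (M : ℤ) then bC n M j.toNat l else 0

noncomputable def alphaC (n N i : ℕ) (l : ℂ) : ℂ :=
  (-1 : ℂ) ^ i * 2 ^ N * ((N.factorial : ℂ) / ((2 * N).factorial : ℂ)) * (N.choose i : ℂ) *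
    (∏ k ∈ Finset.Icc (i + 1) N, (2 * l + (n : ℂ) - 2 * (k : ℂ))) *
    ∏ k ∈ Finset.Icc 1 i, (2 * l + (n : ℂ) - 2 * (k : ℂ) - 2 * (N : ℂ) + 1)

noncomputable def betaC (n N i : ℕ) (l : ℂ) : ℂ :=
  (-1 : ℂ) ^ i * 2 ^ N * ((N.factorial : ℂ) / ((2 * N + 1).factorial : ℂ)) * (N.choose i : ℂ) *
    (∏ k ∈ Finset.Icc (i + 1) N, (2 * l + (n : ℂ) - 2 * (k : ℂ))) *
    ∏ k ∈ Finset.Icc 1 i, (2 * l + (n : ℂ) - 2 * (k : ℂ) - 2 * (N : ℂ) - 1)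

noncomputable def gammaC (n N i : ℕ) (l p : ℂ) : ℂ :=
  (-1 : ℂ) ^ i * 2 ^ N *
    ((N.factorial : ℂ) / (((N : ℂ) + 1) * ((2 * N + 1).factorial : ℂ))) *
    ((N + 1).choose i : ℂ) *
    ((l + p - 2 * (N : ℂ) - 1) * ((N : ℂ) + 1) * (2 * l + (n : ℂ) - 2 * (i : ℂ)) +
      (l + (n : ℂ) - p) * (2 * (N : ℂ) + 1) * ((N : ℂ) - (i : ℂ) + 1)) *
    (∏ k ∈ Finset.Icc (i + 1) N, (2 * l + (n : ℂ) - 2 * (k : ℂ))) *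
    ∏ k ∈ Finset.Icc 1 (i - 1), (2 * l + (n : ℂ) - 2 * (k : ℂ) - 2 * (N : ℂ) - 1)

noncomputable def poch (a : ℂ) (l : ℕ) : ℂ :=
  ∏ m ∈ Finset.range l, (a + (m : ℂ))

noncomputable def fAux (n N i j : ℕ) (l : ℂ) : ℂ :=
  (-1 : ℂ) ^ (N - j - i) * ((N - j).choose i : ℂ) * bC n N j l

noncomputable def gAux (n N i j : ℕ) (l : ℂ) : ℂ :=
  -(j : ℂ) * (2 * l + (n : ℂ) - 4 * (N : ℂ) + 2 * (j : ℂ) - 3) * fAux n N i j l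

lemma cert (n N i j r : ℕ) (hN : N = i + j + 1 + r) (l : ℂ) :
    ((N : ℂ) - i) * (2 * l + n - 2 * N - 3 - 2 * i) * fAux n N i j l
      + ((i : ℂ) + 1) * (2 * l + n - 2 - 2 * i) * fAux n N (i + 1) j l
    = gAux n N i (j + 1) l - gAux n N i j l := by
  subst hN
  have hi1 : ((i : ℂ) + 1) ≠ 0 := by
    have : (((i + 1 : ℕ)) : ℂ) ≠ 0 := Nat.cast_ne_zero.mpr (by omega)
    push_cast at this; exact this
  have hir : ((i : ℂ) + (r : ℂ) + 1) ≠ 0 := by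
    have : (((i + r + 1 : ℕ)) : ℂ) ≠ 0 := Nat.cast_ne_zero.mpr (by omega)
    push_cast at this; exact this
  have h1 : (2 * (i : ℂ) + 2 * (r : ℂ) + 3) ≠ 0 := by
    have : (((2 * i + 2 * r + 3 : ℕ)) : ℂ) ≠ 0 := Nat.cast_ne_zero.mpr (by omega)
    push_cast at this; exact this
  have h2 : (2 * (i : ℂ) + 2 * (r : ℂ) + 2) ≠ 0 := by
    have : (((2 * i + 2 * r + 2 : ℕ)) : ℂ) ≠ 0 := Nat.cast_ne_zero.mpr (by omega)
    push_cast at this; exact this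
  have h3 : ((2 * i + 2 * r + 1).factorial : ℂ) ≠ 0 :=
    Nat.cast_ne_zero.mpr (Nat.factorial_ne_zero _)
  have h4 : ((j.factorial : ℕ) : ℂ) ≠ 0 := Nat.cast_ne_zero.mpr (Nat.factorial_ne_zero _)
  have h5 : ((j : ℂ) + 1) ≠ 0 := by
    have : (((j + 1 : ℕ)) : ℂ) ≠ 0 := Nat.cast_ne_zero.mpr (by omega)
    push_cast at this; exact this
  have hfac3 : ((2 * i + 2 * r + 3).factorial : ℂ)
      = (2 * (i : ℂ) + 2 * (r : ℂ) + 3) * ((2 * (i : ℂ) + 2 * (r : ℂ) + 2)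
        * ((2 * i + 2 * r + 1).factorial : ℂ)) := by
    rw [show 2 * i + 2 * r + 3 = (2 * i + 2 * r + 2) + 1 from rfl, Nat.factorial_succ,
      show 2 * i + 2 * r + 2 = (2 * i + 2 * r + 1) + 1 from rfl, Nat.factorial_succ]
    push_cast; ring
  have hfacj : ((j + 1).factorial : ℂ) = ((j : ℂ) + 1) * (j.factorial : ℂ) := by
    rw [Nat.factorial_succ]; push_cast; ring
  have hc1 : (((i + r + 1).choose (i + 1) : ℕ) : ℂ) * ((i : ℂ) + 1)
      = (((i + r + 1).choose i : ℕ) : ℂ) * ((r : ℂ) + 1) := by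
    have := Nat.choose_succ_right_eq (i + r + 1) i
    rw [show i + r + 1 - i = r + 1 by omega] at this
    exact_mod_cast congrArg (Nat.cast : ℕ → ℂ) this
  have hc2 : (((i + r).choose i : ℕ) : ℂ) * ((i : ℂ) + (r : ℂ) + 1)
      = (((i + r + 1).choose (i + 1) : ℕ) : ℂ) * ((i : ℂ) + 1) := by
    have := Nat.add_one_mul_choose_eq (i + r) i
    have := congrArg (Nat.cast : ℕ → ℂ) this
    push_cast at this
    linear_combination this
  obtain ⟨χ, hχ⟩ : ∃ x : ℂ, (((i + r + 1).choose i : ℕ) : ℂ)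
      / (((i : ℂ) + 1) * ((i : ℂ) + (r : ℂ) + 1)) = x := ⟨_, rfl⟩
  have e0 : (((i + r + 1).choose i : ℕ) : ℂ) = χ * (((i : ℂ) + 1) * ((i : ℂ) + (r : ℂ) + 1)) := by
    rw [← hχ]; field_simp
  have e1 : (((i + r + 1).choose (i + 1) : ℕ) : ℂ)
      = χ * (((r : ℂ) + 1) * ((i : ℂ) + (r : ℂ) + 1)) := by
    have := hc1
    rw [e0] at this
    apply mul_right_cancel₀ hi1
    linear_combination this
  have e2 : (((i + r).choose i : ℕ) : ℂ) = χ * (((r : ℂ) + 1) * ((i : ℂ) + 1)) := by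
    have := hc2
    rw [e1] at this
    apply mul_right_cancel₀ hir
    linear_combination this
  obtain ⟨W, hW⟩ : ∃ w : ℂ, (((i + j + 1 + r).factorial : ℕ) : ℂ)
      / (((j.factorial : ℕ) : ℂ) * (((2 * i + 2 * r + 1).factorial : ℕ) : ℂ)
        * ((2 * (i : ℂ) + 2 * (r : ℂ) + 3) * (2 * (i : ℂ) + 2 * (r : ℂ) + 2) * ((j : ℂ) + 1)))
      = w := ⟨_, rfl⟩
  have f1 : (((i + j + 1 + r).factorial : ℕ) : ℂ)
      / (((j.factorial : ℕ) : ℂ) * (((2 * i + 2 * r + 3).factorial : ℕ) : ℂ))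
      = W * ((j : ℂ) + 1) := by
    rw [← hW, hfac3]; field_simp
  have f2 : (((i + j + 1 + r).factorial : ℕ) : ℂ)
      / ((((j + 1).factorial : ℕ) : ℂ) * (((2 * i + 2 * r + 1).factorial : ℕ) : ℂ))
      = W * ((2 * (i : ℂ) + 2 * (r : ℂ) + 3) * (2 * (i : ℂ) + 2 * (r : ℂ) + 2)) := by
    rw [← hW, hfacj, eq_comm, div_mul_eq_mul_div, div_eq_div_iff (mul_ne_zero (mul_ne_zero h4 h3) (mul_ne_zero (mul_ne_zero h1 h2) h5)) (mul_ne_zero (mul_ne_zero h5 h4) h3)]; ring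
  simp only [fAux, gAux, bC]
  rw [show i + j + 1 + r - j = i + r + 1 by omega,
    show i + j + 1 + r - (j + 1) = i + r by omega,
    show i + r + 1 - i = r + 1 by omega,
    show i + r + 1 - (i + 1) = r by omega,
    show i + r - i = r by omega,
    show 2 * (i + j + 1 + r) - 2 * j + 1 = 2 * i + 2 * r + 3 by omega,
    show 2 * (i + j + 1 + r) - 2 * (j + 1) + 1 = 2 * i + 2 * r + 1 by omega,
    Finset.prod_eq_prod_Ico_succ_bot (by omega : j < i + j + 1 + r)]
  rw [f1, f2, e0, e1, e2]
  push_cast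
  ring

lemma sum_rec (n N i : ℕ) (hi : i < N) (l : ℂ) :
    ((N : ℂ) - i) * (2 * l + n - 2 * N - 3 - 2 * i)
        * (∑ j ∈ Finset.range (N - i + 1), fAux n N i j l)
      + ((i : ℂ) + 1) * (2 * l + n - 2 - 2 * i)
        * (∑ j ∈ Finset.range (N - (i + 1) + 1), fAux n N (i + 1) j l) = 0 := by
  have hzero : fAux n N (i + 1) (N - i) l = 0 := by
    simp [fAux, show N - (N - i) = i by omega,
      Nat.choose_eq_zero_of_lt (Nat.lt_succ_self i)]
  have hext : ∑ j ∈ Finset.range (N - i + 1), fAux n N (i + 1) j l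
      = ∑ j ∈ Finset.range (N - (i + 1) + 1), fAux n N (i + 1) j l := by
    rw [show N - i + 1 = (N - (i + 1) + 1) + 1 by omega,
      Finset.sum_range_succ (fun j => fAux n N (i + 1) j l) (N - (i + 1) + 1),
      show N - (i + 1) + 1 = N - i by omega, hzero, add_zero]
  rw [← hext, Finset.mul_sum, Finset.mul_sum, ← Finset.sum_add_distrib,
    Finset.sum_range_succ]
  have htel : ∑ j ∈ Finset.range (N - i),
      (((N : ℂ) - i) * (2 * l + n - 2 * N - 3 - 2 * i) * fAux n N i j l
        + ((i : ℂ) + 1) * (2 * l + n - 2 - 2 * i) * fAux n N (i + 1) j l)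
      = gAux n N i (N - i) l - gAux n N i 0 l := by
    rw [← Finset.sum_range_sub (fun j => gAux n N i j l) (N - i)]
    exact Finset.sum_congr rfl fun j hj =>
      cert n N i j (N - i - j - 1) (by have := Finset.mem_range.mp hj; omega) l
  rw [htel, hzero, mul_zero, add_zero]
  have hg0 : gAux n N i 0 l = 0 := by simp [gAux]
  rw [hg0, sub_zero, gAux]
  rw [Nat.cast_sub hi.le]
  ring

lemma beta_rec (n N i : ℕ) (hi : i < N) (l : ℂ) :
    ((N : ℂ) - i) * (2 * l + n - 2 * N - 3 - 2 * i) * betaC n N i l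
      + ((i : ℂ) + 1) * (2 * l + n - 2 - 2 * i) * betaC n N (i + 1) l = 0 := by
  have hi1 : ((i : ℂ) + 1) ≠ 0 := by
    have : (((i + 1 : ℕ)) : ℂ) ≠ 0 := Nat.cast_ne_zero.mpr (by omega)
    push_cast at this; exact this
  have hcc : (N.choose (i + 1) : ℂ) * ((i : ℂ) + 1)
      = (N.choose i : ℂ) * ((N : ℂ) - (i : ℂ)) := by
    have h := congrArg (Nat.cast : ℕ → ℂ) (Nat.choose_succ_right_eq N i)
    push_cast [Nat.cast_sub hi.le] at h
    linear_combination h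
  obtain ⟨χ, hχ⟩ : ∃ x : ℂ, (N.choose i : ℂ) / ((i : ℂ) + 1) = x := ⟨_, rfl⟩
  have e0 : (N.choose i : ℂ) = χ * ((i : ℂ) + 1) := by rw [← hχ]; field_simp
  have e1 : (N.choose (i + 1) : ℂ) = χ * ((N : ℂ) - (i : ℂ)) := by
    apply mul_right_cancel₀ hi1
    rw [e0] at hcc
    linear_combination hcc
  rw [betaC, betaC]
  rw [show Finset.Icc (i + 1) N = Finset.Ico (i + 1) (N + 1) from (Finset.Ico_add_one_right_eq_Icc _ _).symm,
    Finset.prod_eq_prod_Ico_succ_bot (by omega : i + 1 < N + 1),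
    show Finset.Icc (i + 1 + 1) N = Finset.Ico (i + 1 + 1) (N + 1) from
      (Finset.Ico_add_one_right_eq_Icc _ _).symm,
    Finset.prod_Icc_succ_top (by omega : 1 ≤ i + 1)]
  rw [e0, e1]
  push_cast
  ring

lemma base_case (n N : ℕ) (l : ℂ) :
    (∑ j ∈ Finset.range (N - N + 1), fAux n N N j l) = betaC n N N l := by
  rw [Nat.sub_self, Finset.sum_range_one]
  rw [fAux, bC, betaC]
  rw [Nat.sub_zero, Nat.choose_self, Nat.sub_self, Finset.Icc_eq_empty (by omega : ¬ N + 1 ≤ N)]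
  have hprod : ∏ k ∈ Finset.Ico 0 N, (2 * l - 4 * (N : ℂ) + 2 * (k : ℂ) + (n : ℂ) - 1)
      = ∏ k ∈ Finset.Icc 1 N, (2 * l + (n : ℂ) - 2 * (k : ℂ) - 2 * (N : ℂ) - 1) := by
    rw [show Finset.Icc 1 N = Finset.Ico 1 (N + 1) from (Finset.Ico_add_one_right_eq_Icc _ _).symm,
      Finset.prod_Ico_eq_prod_range, Finset.prod_Ico_eq_prod_range]
    simp only [Nat.sub_zero, Nat.add_sub_cancel, Nat.zero_add]
    rw [← Finset.prod_range_reflect]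
    refine Finset.prod_congr rfl fun k hk => ?_
    have hk' : k < N := Finset.mem_range.mp hk
    have hcast : ((N - 1 - k : ℕ) : ℂ) = (N : ℂ) - 1 - (k : ℂ) := by
      rw [show N - 1 - k = N - (1 + k) by omega, Nat.cast_sub (by omega)]
      push_cast; ring
    rw [hcast]
    push_cast
    ring
  rw [hprod]
  rw [show (-2 : ℂ) = (-1) * 2 by norm_num, mul_pow]
  rw [show 2 * N - 2 * 0 + 1 = 2 * N + 1 by omega, Nat.factorial_zero]
  push_cast
  ring

lemma generic_case (n N : ℕ) (l : ℂ)
    (hl : ∀ m : ℕ, m < N → 2 * l + (n : ℂ) - 2 * N - 3 - 2 * m ≠ 0) :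
    ∀ k : ℕ, k ≤ N →
      (∑ j ∈ Finset.range (N - (N - k) + 1), fAux n N (N - k) j l) = betaC n N (N - k) l := by
  intro k
  induction k with
  | zero =>
    intro _
    simpa using base_case n N l
  | succ k ih =>
    intro hk
    have hih := ih (by omega)
    have hip : N - k = (N - (k + 1)) + 1 := by omega
    rw [hip] at hih
    set i := N - (k + 1) with hidef
    have hiN : i < N := by omega
    have h1 := sum_rec n N i hiN l
    have h2 := beta_rec n N i hiN l
    rw [hih] at h1
    have hA : ((N : ℂ) - i) * (2 * l + n - 2 * N - 3 - 2 * i) ≠ 0 := by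
      refine mul_ne_zero ?_ (hl i hiN)
      refine sub_ne_zero.mpr ?_
      exact_mod_cast (by omega : N ≠ i)
    have h3 : ((N : ℂ) - i) * (2 * l + n - 2 * N - 3 - 2 * i)
        * ((∑ j ∈ Finset.range (N - i + 1), fAux n N i j l) - betaC n N i l) = 0 := by
      linear_combination h1 - h2
    rcases mul_eq_zero.mp h3 with h | h
    · exact absurd h hA
    · exact sub_eq_zero.mp h

noncomputable def qAux (n N i : ℕ) : Polynomial ℂ :=
  (∑ j ∈ Finset.range (N - i + 1),
      Polynomial.C ((-1 : ℂ) ^ (N - j - i) * ((N - j).choose i : ℂ) * ((-2 : ℂ) ^ (N - j) *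
        ((N.factorial : ℂ) / ((j.factorial : ℂ) * ((2 * N - 2 * j + 1).factorial : ℂ))))) *
      ∏ k ∈ Finset.Ico j N, (Polynomial.C 2 * Polynomial.X
        + Polynomial.C (2 * (k : ℂ) + (n : ℂ) - 1 - 4 * (N : ℂ))))
  - Polynomial.C ((-1 : ℂ) ^ i * 2 ^ N * ((N.factorial : ℂ) / (((2 * N + 1).factorial : ℂ)))
      * (N.choose i : ℂ)) *
    ((∏ k ∈ Finset.Icc (i + 1) N,
        (Polynomial.C 2 * Polynomial.X + Polynomial.C ((n : ℂ) - 2 * (k : ℂ)))) *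
      ∏ k ∈ Finset.Icc 1 i,
        (Polynomial.C 2 * Polynomial.X + Polynomial.C ((n : ℂ) - 2 * (k : ℂ) - 2 * (N : ℂ) - 1)))

lemma qAux_eval (n N i : ℕ) (l : ℂ) :
    (qAux n N i).eval l
      = (∑ j ∈ Finset.range (N - i + 1), fAux n N i j l) - betaC n N i l := by
  simp only [qAux, Polynomial.eval_sub, Polynomial.eval_mul, Polynomial.eval_add,
    Polynomial.eval_C, Polynomial.eval_X, Polynomial.eval_finset_sum, Polynomial.eval_prod]
  congr 1
  · refine Finset.sum_congr rfl fun j hj => ?_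
    rw [fAux, bC]
    rw [show (∏ k ∈ Finset.Ico j N, (2 * l + (2 * (k : ℂ) + (n : ℂ) - 1 - 4 * (N : ℂ))))
        = ∏ k ∈ Finset.Ico j N, (2 * l - 4 * (N : ℂ) + 2 * (k : ℂ) + (n : ℂ) - 1) from
      Finset.prod_congr rfl fun k _ => by ring]
    ring
  · rw [betaC]
    rw [show (∏ k ∈ Finset.Icc (i + 1) N, (2 * l + ((n : ℂ) - 2 * (k : ℂ))))
        = ∏ k ∈ Finset.Icc (i + 1) N, (2 * l + (n : ℂ) - 2 * (k : ℂ)) from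
      Finset.prod_congr rfl fun k _ => by ring]
    rw [show (∏ k ∈ Finset.Icc 1 i, (2 * l + ((n : ℂ) - 2 * (k : ℂ) - 2 * (N : ℂ) - 1)))
        = ∏ k ∈ Finset.Icc 1 i, (2 * l + (n : ℂ) - 2 * (k : ℂ) - 2 * (N : ℂ) - 1) from
      Finset.prod_congr rfl fun k _ => by ring]
    ring

lemma qAux_zero (n N i : ℕ) (hi : i ≤ N) : qAux n N i = 0 := by
  apply Polynomial.eq_zero_of_infinite_isRoot
  have hfin : ({l : ℂ | ∃ m : ℕ, m < N ∧ 2 * l + (n : ℂ) - 2 * N - 3 - 2 * m = 0}).Finite := by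
    apply Set.Finite.subset
      (Set.Finite.image (fun m : ℕ => ((2 * (N : ℂ) + 3 + 2 * m - n) / 2)) (Finset.range N).finite_toSet)
    rintro l ⟨m, hm, he⟩
    exact ⟨m, by simpa using hm, by field_simp; linear_combination -he⟩
  refine Set.Infinite.mono ?_ (Set.infinite_univ.diff hfin)
  rintro l ⟨-, hl⟩
  have hl' : ∀ m : ℕ, m < N → 2 * l + (n : ℂ) - 2 * N - 3 - 2 * m ≠ 0 := by
    intro m hm h
    exact hl ⟨m, hm, h⟩
  have := generic_case n N l hl' (N - i) (by omega)
  rw [show N - (N - i) = i by omega] at this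
  show (qAux n N i).eval l = 0
  rw [qAux_eval, this, sub_self]


theorem jacobi_gegenbauer_sum_odd (n : ℕ) (hn : 2 ≤ n) (N : ℕ) (l : ℂ)
    (i : ℕ) (hi : i ≤ N) :
    ∑ j ∈ Finset.range (N - i + 1),
        (-1 : ℂ) ^ (N - j - i) * ((N - j).choose i : ℂ) * bC n N j l
      = betaC n N i l := by
  have hq := qAux_zero n N i hi
  have he := qAux_eval n N i l
  rw [hq] at he
  simp only [Polynomial.eval_zero] at he
  have h : (∑ j ∈ Finset.range (N - i + 1), fAux n N i j l) = betaC n N i l :=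
    sub_eq_zero.mp he.symm
  exact h
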